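/- Let G be a finite abelian group, H ≤ G a subgroup, and T₁, ..., T_k ⊆ H subsets sharing a common spectrum L ⊆ Ĥ (i.e., L is a spectrum of T_j in H for each j). Let (Q, Q') be a spectral pair in G/H with #Q = k, and choose representatives q₁, ..., q_k ∈ G of the cosets in Q. Then Γ := ⋃_{j=1}^{k} (q_j + T_j) is a spectral set in G; a spectrum is given by L̃ + Q̃', where Q̃' is a lift of Q' to Ĝ and L̃ consists of extensions of the characters in L to G. -/
import Mathlib

open scoped BigOperators
open Function

section Ext
variable {G : Type*} [AddCommGroup G] [Fintype G] (H : AddSubgroup G)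

/-- A character trivial on `H` descends to the quotient. -/
private def quotChar (ψ : AddChar G ℂ) (hψ : ∀ h : H, ψ (h : G) = 1) : AddChar (G ⧸ H) ℂ where
  toFun := Quotient.lift (ψ : G → ℂ) (by
    intro a b hab
    have hab' : -a + b ∈ H := QuotientAddGroup.leftRel_apply.mp hab
    have h1 : ψ (a + (-a + b)) = ψ a * ψ (-a + b) := AddChar.map_add_eq_mul ψ _ _
    rw [add_neg_cancel_left] at h1
    rw [h1, hψ ⟨-a + b, hab'⟩, mul_one])
  map_zero_eq_one' := AddChar.map_zero_eq_one ψ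
  map_add_eq_mul' := by
    intro x y
    refine QuotientAddGroup.induction_on x fun a => ?_
    refine QuotientAddGroup.induction_on y fun b => ?_
    show ψ (a + b) = ψ a * ψ b
    exact AddChar.map_add_eq_mul ψ a b

private lemma quotChar_mk (ψ : AddChar G ℂ) (hψ : ∀ h : H, ψ (h : G) = 1) (g : G) :
    quotChar H ψ hψ (QuotientAddGroup.mk g) = ψ g := rfl

private lemma res_surjective :
    Surjective fun ψ : AddChar G ℂ => ψ.compAddMonoidHom H.subtype := by
  classical
  let res : AddChar G ℂ →* AddChar H ℂ :=
    { toFun := fun ψ => ψ.compAddMonoidHom H.subtype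
      map_one' := rfl
      map_mul' := fun ψ χ => rfl }
  suffices h : Surjective res from h
  rw [← MonoidHom.range_eq_top]
  apply Subgroup.eq_top_of_card_eq
  have hker : Nat.card res.ker = Nat.card (G ⧸ H) := by
    have hchar : Nat.card (AddChar (G ⧸ H) ℂ) = Nat.card (G ⧸ H) := by
      simp [Nat.card_eq_fintype_card]
    rw [← hchar]
    refine (Nat.card_congr (Equiv.ofBijective
      (fun κ : AddChar (G ⧸ H) ℂ =>
        (⟨κ.compAddMonoidHom (QuotientAddGroup.mk' H), ?_⟩ : res.ker)) ⟨?_, ?_⟩)).symm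
    · rw [MonoidHom.mem_ker]
      ext h
      show κ (QuotientAddGroup.mk (h : G)) = 1
      rw [(QuotientAddGroup.eq_zero_iff _).2 h.2, AddChar.map_zero_eq_one]
    · intro κ ν h
      have := Subtype.ext_iff.mp h
      exact AddChar.compAddMonoidHom_injective_left (QuotientAddGroup.mk' H)
        (QuotientAddGroup.mk'_surjective H) this
    · rintro ⟨ψ, hψ⟩
      have hψ' : ∀ h : H, ψ (h : G) = 1 := by
        intro h
        have := MonoidHom.mem_ker.mp hψ
        exact DFunLike.congr_fun this h
      exact ⟨quotChar H ψ hψ', Subtype.ext (by ext g; rfl)⟩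
  have h1 : Nat.card (AddChar G ℂ) =
      Nat.card (AddChar G ℂ ⧸ res.ker) * Nat.card res.ker :=
    Subgroup.card_eq_card_quotient_mul_card_subgroup res.ker
  have h2 : Nat.card (AddChar G ℂ ⧸ res.ker) = Nat.card res.range :=
    Nat.card_congr (QuotientGroup.quotientKerEquivRange res).toEquiv
  have h3 : Nat.card (AddChar G ℂ) = Nat.card G := by
    simp [Nat.card_eq_fintype_card]
  have h4 : Nat.card (AddChar H ℂ) = Nat.card H := by
    simp [Nat.card_eq_fintype_card]
  have h5 : Nat.card G = Nat.card (G ⧸ H) * Nat.card H :=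
    AddSubgroup.card_eq_card_quotient_mul_card_addSubgroup H
  have hpos : 0 < Nat.card (G ⧸ H) := Nat.card_pos
  rw [h2, hker, h3, h5, mul_comm (Nat.card res.range)] at h1
  rw [h4]
  exact Nat.eq_of_mul_eq_mul_left hpos h1.symm

end Ext
/-- Proposition 2: If `T₁,…,T_k ⊆ H` share a common spectrum `L ⊆ Ĥ`
(in the combinatorial sense: `#L = #T_j` and quotients of distinct elements of `L`
annihilate `χ̂_{T_j}`), and `(Q, Q')` is a spectral pair in `G/H` with `#Q = k`
whose cosets have representatives `q j`, then `Γ = ⋃_j (q j + T j)` is spectral in `G`. -/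
theorem stmt5 (G : Type*) [AddCommGroup G] [Fintype G] [DecidableEq G]
    (H : AddSubgroup G) [DecidableEq (G ⧸ H)]
    (k : ℕ) (T : Fin k → Finset H)
    (L : Finset (AddChar H ℂ))
    (hL : ∀ j, L.card = (T j).card ∧
      ∀ lam ∈ L, ∀ mu ∈ L, lam ≠ mu → ∑ x ∈ T j, (lam * mu⁻¹) x = 0)
    (Q : Finset (G ⧸ H)) (Q' : Finset (AddChar (G ⧸ H) ℂ))
    (hQQ' : Q'.card = Q.card ∧
      ∀ lam ∈ Q', ∀ mu ∈ Q', lam ≠ mu → ∑ y ∈ Q, (lam * mu⁻¹) y = 0)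
    (hQcard : Q.card = k)
    (q : Fin k → G)
    (hq : ∀ j, (QuotientAddGroup.mk (q j) : G ⧸ H) ∈ Q)
    (hq_inj : Function.Injective fun j : Fin k => (QuotientAddGroup.mk (q j) : G ⧸ H)) :
    ∃ Λ : Finset (AddChar G ℂ),
      Λ.card = (Finset.univ.biUnion fun j : Fin k =>
          (T j).image fun t : H => q j + (t : G)).card ∧
      ∀ lam ∈ Λ, ∀ mu ∈ Λ, lam ≠ mu →
        ∑ x ∈ (Finset.univ.biUnion fun j : Fin k => (T j).image fun t : H => q j + (t : G)),
          (lam * mu⁻¹) x = 0 := by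
  classical
  -- extension of characters of H to G
  choose ext hext using res_surjective H
  have hext' : ∀ (l : AddChar H ℂ) (h : H), ext l (h : G) = l h := by
    intro l h
    have := DFunLike.congr_fun (hext l) h
    exact this
  -- lift of characters of G/H to G
  set lift : AddChar (G ⧸ H) ℂ → AddChar G ℂ :=
    fun κ => κ.compAddMonoidHom (QuotientAddGroup.mk' H) with hlift
  have hlift' : ∀ (κ : AddChar (G ⧸ H) ℂ) (g : G),
      lift κ g = κ (QuotientAddGroup.mk g) := fun κ g => rfl
  set F : AddChar H ℂ × AddChar (G ⧸ H) ℂ → AddChar G ℂ :=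
    fun p => ext p.1 * lift p.2 with hF
  have hmk0 : ∀ t : H, (QuotientAddGroup.mk (t : G) : G ⧸ H) = 0 :=
    fun t => (QuotientAddGroup.eq_zero_iff _).2 t.2
  have hF_inj : Function.Injective F := by
    rintro ⟨l1, k1⟩ ⟨l2, k2⟩ h
    have hl : l1 = l2 := by
      ext h0
      have h1 := DFunLike.congr_fun h ((h0 : G))
      simpa [F, hlift', hext', hmk0 h0] using h1
    subst hl
    have hk : lift k1 = lift k2 := by
      have := mul_left_cancel (a := ext l1) (by simpa [F] using h)
      exact this
    have : k1 = k2 := AddChar.compAddMonoidHom_injective_left (QuotientAddGroup.mk' H)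
      (QuotientAddGroup.mk'_surjective H) hk
    simp [this]
  set Λ : Finset (AddChar G ℂ) := (L ×ˢ Q').image F with hΛ
  set Γ : Finset G := Finset.univ.biUnion
    (fun j : Fin k => (T j).image fun t : H => q j + (t : G)) with hΓ
  -- injectivity of the translations
  have htr_inj : ∀ j : Fin k, Function.Injective (fun t : H => q j + (t : G)) := by
    intro j a b hab
    exact Subtype.ext (by simpa using hab)
  -- disjointness
  have hdisj : ∀ i ∈ (Finset.univ : Finset (Fin k)), ∀ j ∈ (Finset.univ : Finset (Fin k)),
      i ≠ j → Disjoint ((T i).image fun t : H => q i + (t : G))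
        ((T j).image fun t : H => q j + (t : G)) := by
    intro i _ j _ hij
    rw [Finset.disjoint_left]
    rintro x hx hx'
    simp only [Finset.mem_image] at hx hx'
    obtain ⟨t, ht, rfl⟩ := hx
    obtain ⟨s, hs, hts⟩ := hx'
    apply hij
    apply hq_inj
    have h1 : (QuotientAddGroup.mk (q i + (t : G)) : G ⧸ H)
        = QuotientAddGroup.mk (q j + (s : G)) := by rw [hts]
    show (QuotientAddGroup.mk (q i) : G ⧸ H) = QuotientAddGroup.mk (q j)
    simpa [QuotientAddGroup.mk_add, hmk0 t, hmk0 s] using h1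
  have hΓcard : Γ.card = k * L.card := by
    rw [hΓ, Finset.card_biUnion hdisj]
    have hc : ∀ j : Fin k, ((T j).image fun t : H => q j + (t : G)).card = L.card := by
      intro j
      rw [Finset.card_image_of_injective _ (htr_inj j), (hL j).1]
    simp [hc, Finset.sum_const, Finset.card_univ, mul_comm]
  refine ⟨Λ, ?_, ?_⟩
  · rw [hΛ, Finset.card_image_of_injective _ hF_inj, Finset.card_product, hΓcard,
      hQQ'.1, hQcard, mul_comm]
  intro lam hlam mu hmu hne
  rw [hΛ, Finset.mem_image] at hlam hmu
  obtain ⟨⟨l1, k1⟩, hp1, rfl⟩ := hlam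
  obtain ⟨⟨l2, k2⟩, hp2, rfl⟩ := hmu
  obtain ⟨hl1, hk1⟩ := Finset.mem_product.mp hp1
  obtain ⟨hl2, hk2⟩ := Finset.mem_product.mp hp2
  -- pointwise value of the character ratio
  have hval : ∀ (g : G) (t : H),
      (F (l1, k1) * (F (l2, k2))⁻¹) (g + (t : G))
        = ((k1 * k2⁻¹) (QuotientAddGroup.mk g))
            * (ext l1 g * (ext l2 g)⁻¹) * ((l1 * l2⁻¹) t) := by
    intro g t
    have hmkneg : (QuotientAddGroup.mk (-(g + (t : G))) : G ⧸ H)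
        = -(QuotientAddGroup.mk g) := by
      simp [QuotientAddGroup.mk_add, hmk0 t]
    simp only [AddChar.mul_apply, AddChar.inv_apply, F, hlift',
      AddChar.map_add_eq_mul, AddChar.map_neg_eq_inv, hmkneg, hmk0 t,
      QuotientAddGroup.mk_add, QuotientAddGroup.mk_neg, AddChar.map_zero_eq_one,
      neg_zero, inv_one, add_zero, hext', mul_inv, mul_one]
    ring
  -- reindex Q by Fin k
  have himg : Finset.univ.image (fun j : Fin k => (QuotientAddGroup.mk (q j) : G ⧸ H)) = Q := by
    apply Finset.eq_of_subset_of_card_le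
    · intro y hy
      obtain ⟨j, _, rfl⟩ := Finset.mem_image.mp hy
      exact hq j
    · rw [Finset.card_image_of_injective _ hq_inj, Finset.card_univ, Fintype.card_fin, hQcard]
  rw [hΓ, Finset.sum_biUnion (fun i _ j _ hij => hdisj i (Finset.mem_univ i) j (Finset.mem_univ j) hij)]
  have hsum_j : ∀ j : Fin k,
      ∑ x ∈ (T j).image (fun t : H => q j + (t : G)), (F (l1, k1) * (F (l2, k2))⁻¹) x
        = ((k1 * k2⁻¹) (QuotientAddGroup.mk (q j)) * (ext l1 (q j) * (ext l2 (q j))⁻¹))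
            * ∑ t ∈ T j, (l1 * l2⁻¹) t := by
    intro j
    rw [Finset.sum_image (fun a _ b _ hab => htr_inj j hab), Finset.mul_sum]
    refine Finset.sum_congr rfl fun t ht => ?_
    rw [hval (q j) t]
    try ring
  by_cases hll : l1 = l2
  · -- spectra of Q separate
    subst hll
    have hkk : k1 ≠ k2 := by
      intro h; exact hne (by rw [h])
    have hsum_T : ∀ j : Fin k, ∑ t ∈ T j, (l1 * l1⁻¹) t = (L.card : ℂ) := by
      intro j
      have : ∀ t : H, (l1 * l1⁻¹) t = 1 := by
        intro t; rw [mul_inv_cancel]; simp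
      simp [this, (hL j).1]
    have hQ0 : ∑ y ∈ Q, (k1 * k2⁻¹) y = 0 := hQQ'.2 k1 hk1 k2 hk2 hkk
    calc ∑ j : Fin k, ∑ x ∈ (T j).image (fun t : H => q j + (t : G)),
          (F (l1, k1) * (F (l1, k2))⁻¹) x
        = ∑ j : Fin k, (k1 * k2⁻¹) (QuotientAddGroup.mk (q j))
            * ((ext l1 (q j) * (ext l1 (q j))⁻¹) * (L.card : ℂ)) := by
          refine Finset.sum_congr rfl fun j _ => ?_
          rw [hsum_j j, hsum_T j]; ring
      _ = ∑ j : Fin k, (k1 * k2⁻¹) (QuotientAddGroup.mk (q j)) * (L.card : ℂ) := by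
          refine Finset.sum_congr rfl fun j _ => ?_
          have hne0 : ext l1 (q j) ≠ 0 := by
            intro h0
            have := AddChar.map_add_eq_mul (ext l1) (q j) (-(q j))
            simp [h0] at this
          rw [mul_inv_cancel₀ hne0, one_mul]
      _ = (∑ j : Fin k, (k1 * k2⁻¹) (QuotientAddGroup.mk (q j))) * (L.card : ℂ) := by
          rw [Finset.sum_mul]
      _ = (∑ y ∈ Q, (k1 * k2⁻¹) y) * (L.card : ℂ) := by
          rw [← himg, Finset.sum_image (fun a _ b _ hab => hq_inj hab)]
      _ = 0 := by rw [hQ0, zero_mul]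
  · -- spectra of the T j separate
    have hT0 : ∀ j : Fin k, ∑ t ∈ T j, (l1 * l2⁻¹) t = 0 :=
      fun j => (hL j).2 l1 hl1 l2 hl2 hll
    refine Finset.sum_eq_zero fun j _ => ?_
    rw [hsum_j j, hT0 j, mul_zero]
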